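/- Every 3×3 complex matrix A is unitarily tridiagonalisable: there exists a unitary U ∈ U(3) such that U A U* is tridiagonal. -/

import Mathlib

open Matrix
open scoped ComplexInnerProductSpace

/-- A matrix is tridiagonal if all entries with |i-j| ≥ 2 vanish. -/
def IsTridiagonal {n : ℕ} (B : Matrix (Fin n) (Fin n) ℂ) : Prop :=
  ∀ i j : Fin n, 2 ≤ |(i : ℤ) - (j : ℤ)| → B i j = 0

theorem tridiagonalisable_three (A : Matrix (Fin 3) (Fin 3) ℂ) :
    ∃ U ∈ Matrix.unitaryGroup (Fin 3) ℂ, IsTridiagonal (U * A * Uᴴ) := by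
  classical
  let f : Module.End ℂ (EuclideanSpace ℂ (Fin 3)) :=
    { toFun := fun x => WithLp.toLp 2 (A.mulVec x)
      map_add' := fun x y => by ext i; simp [Matrix.mulVec_add]
      map_smul' := fun c x => by ext i; simp [Matrix.mulVec_smul] }
  obtain ⟨μ, hμ⟩ := Module.End.exists_eigenvalue f
  obtain ⟨x, hx⟩ := hμ.exists_hasEigenvector
  have hx0 : x ≠ 0 := hx.2
  set v : EuclideanSpace ℂ (Fin 3) := (‖x‖ : ℂ)⁻¹ • x with hvdef
  have hvnorm : ‖v‖ = 1 := by
    rw [hvdef, norm_smul]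
    simp [inv_mul_cancel₀ (norm_ne_zero_iff.mpr hx0)]
  have hveig : f v = μ • v := by
    rw [hvdef, f.map_smul, hx.apply_eq_smul, smul_comm]
  have hAv : (WithLp.toLp 2 (A.mulVec v) : EuclideanSpace ℂ (Fin 3)) = μ • v := hveig
  set y : EuclideanSpace ℂ (Fin 3) := WithLp.toLp 2 ((Aᴴ).mulVec v) with hydef
  set S : Submodule ℂ (EuclideanSpace ℂ (Fin 3)) := Submodule.span ℂ {v, y} with hSdef
  have hvS : v ∈ S := Submodule.subset_span (by simp)
  have hyS : y ∈ S := Submodule.subset_span (by simp)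
  have hSne : Sᗮ ≠ ⊥ := by
    intro h
    have hS : S = ⊤ := Submodule.orthogonal_eq_bot_iff.mp h
    have h2 : Module.finrank ℂ S ≤ 2 := by
      refine le_trans (finrank_span_le_card ({v, y} : Set (EuclideanSpace ℂ (Fin 3)))) ?_
      have : ({v, y} : Set (EuclideanSpace ℂ (Fin 3))).toFinset.card ≤ 2 := by
        rw [Set.toFinset_insert, Set.toFinset_singleton]
        exact le_trans (Finset.card_insert_le _ _) (by simp)
      exact this
    rw [hS] at h2
    have h3 : Module.finrank ℂ (EuclideanSpace ℂ (Fin 3)) = 3 := by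
      simp [finrank_euclideanSpace]
    rw [finrank_top, h3] at h2
    omega
  obtain ⟨z, hzS, hz0⟩ := Submodule.exists_mem_ne_zero_of_ne_bot hSne
  set w : EuclideanSpace ℂ (Fin 3) := (‖z‖ : ℂ)⁻¹ • z with hwdef
  have hwS : w ∈ Sᗮ := Submodule.smul_mem _ _ hzS
  have hwnorm : ‖w‖ = 1 := by
    rw [hwdef, norm_smul]
    simp [inv_mul_cancel₀ (norm_ne_zero_iff.mpr hz0)]
  have hvw : ⟪v, w⟫ = 0 := (Submodule.mem_orthogonal S w).mp hwS v hvS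
  have hyw : ⟪y, w⟫ = 0 := (Submodule.mem_orthogonal S w).mp hwS y hyS
  set g : Fin 3 → EuclideanSpace ℂ (Fin 3) := fun i => if i = 0 then v else w with hgdef
  have hcard : Module.finrank ℂ (EuclideanSpace ℂ (Fin 3)) = Fintype.card (Fin 3) := by
    simp [finrank_euclideanSpace]
  have horth : Orthonormal ℂ (({0, 2} : Set (Fin 3)).restrict g) := by
    rw [orthonormal_iff_ite]
    rintro ⟨i, hi⟩ ⟨j, hj⟩
    simp only [Set.mem_insert_iff, Set.mem_singleton_iff] at hi hj
    have hvv : ⟪v, v⟫ = 1 := by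
      simp [inner_self_eq_norm_sq_to_K, hvnorm]
    have hww : ⟪w, w⟫ = 1 := by
      simp [inner_self_eq_norm_sq_to_K, hwnorm]
    have hwv : ⟪w, v⟫ = 0 := by
      rw [← inner_conj_symm, hvw, map_zero]
    rcases hi with rfl | rfl <;> rcases hj with rfl | rfl <;>
      simp [Set.restrict, hgdef, hvv, hww, hvw, hwv, Subtype.ext_iff, hvnorm, hwnorm]
  obtain ⟨b, hb⟩ := horth.exists_orthonormalBasis_extension_of_card_eq hcard
  have hb0 : b 0 = v := by simpa [hgdef] using hb 0 (by simp)
  have hb2 : b 2 = w := by simpa [hgdef] using hb 2 (by simp)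
  set U : Matrix (Fin 3) (Fin 3) ℂ := Matrix.of fun i j => starRingEnd ℂ (b i j) with hUdef
  have hkey : ∀ i j, (U * A * Uᴴ) i j = ⟪b i, (WithLp.toLp 2 (A.mulVec (b j)) : EuclideanSpace ℂ (Fin 3))⟫ := by
    intro i j
    simp only [Matrix.mul_apply, Matrix.conjTranspose_apply, hUdef, Matrix.of_apply,
      PiLp.inner_apply, Matrix.mulVec, dotProduct, RCLike.inner_apply,
      Finset.sum_mul, Finset.mul_sum]
    rw [Finset.sum_comm]
    refine Finset.sum_congr rfl fun k _ => Finset.sum_congr rfl fun l _ => ?_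
    simp only [starRingEnd_apply, star_star]
    ring
  refine ⟨U, ?_, ?_⟩
  · rw [Matrix.mem_unitaryGroup_iff]
    ext i j
    have hbij := orthonormal_iff_ite.mp b.orthonormal i j
    simp only [Matrix.mul_apply, Matrix.star_apply, hUdef, Matrix.of_apply, Matrix.one_apply]
    rw [← hbij]
    simp only [PiLp.inner_apply, RCLike.inner_apply]
    refine Finset.sum_congr rfl fun k _ => ?_
    simp only [starRingEnd_apply, star_star]
    exact mul_comm _ _
  · intro i j hij
    fin_cases i <;> fin_cases j <;> try (exfalso; revert hij; decide)
    · -- (0,2) entry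
      show (U * A * Uᴴ) 0 2 = 0
      rw [hkey, hb0, hb2]
      have hadj : ⟪v, (WithLp.toLp 2 (A.mulVec w) : EuclideanSpace ℂ (Fin 3))⟫
          = ⟪y, w⟫ := by
        rw [hydef]
        simp only [PiLp.inner_apply, RCLike.inner_apply, Matrix.mulVec, dotProduct,
          Matrix.conjTranspose_apply, map_sum, Finset.mul_sum, Finset.sum_mul]
        rw [Finset.sum_comm]
        refine Finset.sum_congr rfl fun k _ => Finset.sum_congr rfl fun l _ => ?_
        simp only [starRingEnd_apply, star_star, star_mul']
        ring
      rw [hadj]; exact hyw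
    · -- (2,0) entry
      show (U * A * Uᴴ) 2 0 = 0
      rw [hkey, hb0, hb2, hAv, inner_smul_right, ← inner_conj_symm, hvw]
      simp
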